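/- Let (x_n) be a sequence of real-valued random variables on a common probability space such that each x_n has a unique median m_n, and let (x_n') be an independent copy of the sequence (x_n), defined on a product probability space. If x_n − x_n' → 0 almost surely, then x_n − m_n → 0 almost surely. -/

import Mathlib

open MeasureTheory ProbabilityTheory Filter

/-- `m` is a median of the real random variable `x` under `P`. -/
def IsMedian {Ω : Type*} [MeasurableSpace Ω] (P : Measure Ω) (x : Ω → ℝ) (m : ℝ) : Prop :=
  (1 / 2 : ENNReal) ≤ P {ω | x ω ≤ m} ∧ (1 / 2 : ENNReal) ≤ P {ω | m ≤ x ω}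

/-- If each `x_n` has a unique median `m_n`, `(x_n')` is an independent copy of
the sequence `(x_n)` defined on a product probability space, and
`x_n(ω) − x_n'(ω') → 0` for `P ⊗ P'`-a.e. `(ω, ω')`, then `x_n − m_n → 0` `P`-a.s. -/
theorem sub_median_tendsto_ae
    {Ω Ω' : Type*} [MeasurableSpace Ω] [MeasurableSpace Ω']
    (P : Measure Ω) [IsProbabilityMeasure P]
    (P' : Measure Ω') [IsProbabilityMeasure P']
    (x : ℕ → Ω → ℝ) (x' : ℕ → Ω' → ℝ) (m : ℕ → ℝ)
    (hmeas : ∀ n, Measurable (x n)) (hmeas' : ∀ n, Measurable (x' n))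
    (hid : ∀ n, P.map (x n) = P'.map (x' n))
    (hmed : ∀ n, IsMedian P (x n) (m n))
    (huniq : ∀ n m', IsMedian P (x n) m' → m' = m n)
    (hconv : ∀ᵐ p ∂(P.prod P'),
      Tendsto (fun n => x n p.1 - x' n p.2) atTop (nhds 0)) :
    ∀ᵐ ω ∂P, Tendsto (fun n => x n ω - m n) atTop (nhds 0) := by
  -- swap the product: get a.e. statement on P'.prod P
  have hswap : ∀ᵐ q ∂(P'.prod P),
      Tendsto (fun n => x n q.2 - x' n q.1) atTop (nhds 0) := by
    rw [← Measure.prod_swap]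
    exact ((MeasurableEquiv.prodComm : Ω × Ω' ≃ᵐ Ω' × Ω).measurableEmbedding.ae_map_iff).2 hconv
  have h1 : ∀ᵐ ω' ∂P', ∀ᵐ ω ∂P,
      Tendsto (fun n => x n ω - x' n ω') atTop (nhds 0) :=
    Measure.ae_ae_of_ae_prod hswap
  obtain ⟨ω', hω'⟩ := h1.exists
  set b : ℕ → ℝ := fun n => x' n ω' with hb
  -- convergence in measure
  have hTIM : TendstoInMeasure P (fun n ω => x n ω - b n) atTop (0 : Ω → ℝ) :=
    tendstoInMeasure_of_tendsto_ae
      (fun n => ((hmeas n).sub measurable_const).aestronglyMeasurable)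
      (by filter_upwards [hω'] with ω hω; simpa using hω)
  -- b n - m n → 0
  have hbm : Tendsto (fun n => b n - m n) atTop (nhds 0) := by
    rw [Metric.tendsto_atTop]
    intro ε hε
    have h2 := (hTIM (ENNReal.ofReal ε) (ENNReal.ofReal_pos.2 hε)).eventually (eventually_lt_nhds (by norm_num : (0:ENNReal) < 1/2))
    rw [eventually_atTop] at h2
    obtain ⟨N, hN⟩ := h2
    refine ⟨N, fun n hn => ?_⟩
    have hsmall := hN n hn
    have key : ∀ s : Set Ω, s ⊆ {ω | ε ≤ dist (x n ω - b n) ((0:Ω → ℝ) ω)} →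
        ¬ ((1/2 : ENNReal) ≤ P s) := fun s hs h =>
      absurd (h.trans (measure_mono (hs.trans fun ω (hω : ε ≤ dist _ _) => by
        rw [Set.mem_setOf_eq, edist_dist]; exact ENNReal.ofReal_le_ofReal hω))) (not_le.2 hsmall)
    rw [Real.dist_eq, sub_zero, abs_sub_lt_iff]
    constructor
    · by_contra h
      push_neg at h
      exact key {ω | x n ω ≤ m n} (fun ω (hω : x n ω ≤ m n) => by
        simp only [Set.mem_setOf_eq, Pi.zero_apply, Real.dist_eq, sub_zero]
        have h1 : x n ω - b n ≤ -ε := by linarith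
        calc ε ≤ -(x n ω - b n) := by linarith
        _ ≤ |x n ω - b n| := neg_le_abs _) (hmed n).1
    · by_contra h
      push_neg at h
      exact key {ω | m n ≤ x n ω} (fun ω (hω : m n ≤ x n ω) => by
        simp only [Set.mem_setOf_eq, Pi.zero_apply, Real.dist_eq, sub_zero]
        have h1 : ε ≤ x n ω - b n := by linarith
        exact h1.trans (le_abs_self _)) (hmed n).2
  -- combine
  filter_upwards [hω'] with ω hω
  have := hω.add hbm
  simpa [hb] using this
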